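/- Let n ≥ 2 and let P_n be the graph on the 2n vertices a_0, …, a_{n−1}, b_0, …, b_{n−1} whose edges are: all pairs a_i a_j (i ≠ j), all pairs b_i b_j (i ≠ j), and a_i b_i for every i = 0, …, n−1 (i.e., the Cartesian product of the complete graph K_n with a single edge). Then for every α with 1/(n+1) ≤ α ≤ 1, every intercommunity edge a_i b_i satisfies κ^α(a_i b_i) ≥ 2(1−α)/n; in particular, when 1/(n+1) ≤ α < 1, every intercommunity edge a_i b_i has strictly positive curvature. -/

import Mathlib

open Finset

/-- A probability measure on the vertex set. -/
def IsProbMeasure {V : Type*} [Fintype V] (μ : V → ℝ) : Prop :=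
  (∀ z, 0 ≤ μ z) ∧ ∑ z, μ z = 1

/-- A transference plan between two probability measures. -/
def IsTransferencePlan {V : Type*} [Fintype V] (μ ν : V → ℝ) (π : V → V → ℝ) : Prop :=
  (∀ i j, 0 ≤ π i j) ∧ (∀ i, ∑ j, π i j = μ i) ∧ (∀ j, ∑ i, π i j = ν j)

/-- The 1-Wasserstein distance between two measures on a graph:
the infimum of the transport cost over all transference plans. -/
noncomputable def Wass {V : Type*} [Fintype V] (G : SimpleGraph V) (μ ν : V → ℝ) : ℝ :=
  sInf {c : ℝ | ∃ π : V → V → ℝ, IsTransferencePlan μ ν π ∧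
    c = ∑ i : V, ∑ j : V, π i j * (G.dist i j : ℝ)}

open scoped Classical in
/-- The α-lazy random walk measure at a vertex `x`:
mass α at `x`, mass (1-α)/dₓ at each neighbour of `x`. -/
noncomputable def lazyWalk {V : Type*} [Fintype V] (G : SimpleGraph V) (α : ℝ) (x : V) :
    V → ℝ :=
  fun z =>
    if z = x then α
    else if G.Adj x z then (1 - α) / ((G.neighborSet x).ncard : ℝ) else 0

/-- The α-Ollivier-Ricci curvature of the edge `xy`: κ = 1 − W(mₓ, m_y). -/
noncomputable def kappa {V : Type*} [Fintype V] (G : SimpleGraph V) (α : ℝ) (x y : V) : ℝ :=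
  1 - Wass G (lazyWalk G α x) (lazyWalk G α y)

/-- The Cartesian product of the complete graph `K n` with a single edge: two complete
copies of `Fin n` (the `a` side `Sum.inl` and the `b` side `Sum.inr`), together with all
intercommunity edges `aᵢbᵢ`, `i = 0,…,n−1`. -/
def Pn (n : ℕ) : SimpleGraph (Fin n ⊕ Fin n) :=
  SimpleGraph.fromRel (fun u v =>
    match u, v with
    | Sum.inl _, Sum.inl _ => True
    | Sum.inr _, Sum.inr _ => True
    | Sum.inl i, Sum.inr j => i = j
    | Sum.inr _, Sum.inl _ => False)
section Aux
variable {n : ℕ}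

lemma Pn_adj_ll (j k : Fin n) : (Pn n).Adj (.inl j) (.inl k) ↔ j ≠ k := by
  simp [Pn]

lemma Pn_adj_rr (j k : Fin n) : (Pn n).Adj (.inr j) (.inr k) ↔ j ≠ k := by
  simp [Pn]

lemma Pn_adj_lr (j k : Fin n) : (Pn n).Adj (.inl j) (.inr k) ↔ j = k := by
  simp [Pn]

lemma Pn_adj_rl (j k : Fin n) : (Pn n).Adj (.inr j) (.inl k) ↔ k = j := by
  simp [Pn]

lemma Pn_nbr_l (i : Fin n) :
    (Pn n).neighborSet (Sum.inl i) =
      ↑(insert (Sum.inr i) ((Finset.univ.erase i).image Sum.inl) : Finset (Fin n ⊕ Fin n)) := by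
  ext v
  cases v with
  | inl j => simp [SimpleGraph.neighborSet, Pn_adj_ll, eq_comm, ne_comm]
  | inr j => simp [SimpleGraph.neighborSet, Pn_adj_lr, eq_comm]

lemma Pn_nbr_r (i : Fin n) :
    (Pn n).neighborSet (Sum.inr i) =
      ↑(insert (Sum.inl i) ((Finset.univ.erase i).image Sum.inr) : Finset (Fin n ⊕ Fin n)) := by
  ext v
  cases v with
  | inl j => simp [SimpleGraph.neighborSet, Pn_adj_rl, eq_comm]
  | inr j => simp [SimpleGraph.neighborSet, Pn_adj_rr, eq_comm, ne_comm]

lemma Pn_ncard_l (hn : 1 ≤ n) (i : Fin n) : ((Pn n).neighborSet (Sum.inl i)).ncard = n := by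
  rw [Pn_nbr_l, Set.ncard_coe_finset, Finset.card_insert_of_notMem (by simp),
    Finset.card_image_of_injective _ Sum.inl_injective, Finset.card_erase_of_mem (by simp),
    Finset.card_univ, Fintype.card_fin]
  omega

lemma Pn_ncard_r (hn : 1 ≤ n) (i : Fin n) : ((Pn n).neighborSet (Sum.inr i)).ncard = n := by
  rw [Pn_nbr_r, Set.ncard_coe_finset, Finset.card_insert_of_notMem (by simp),
    Finset.card_image_of_injective _ Sum.inr_injective, Finset.card_erase_of_mem (by simp),
    Finset.card_univ, Fintype.card_fin]
  omega
end Aux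

section Aux2
variable {n : ℕ}

lemma lazy_l_ll (hn : 1 ≤ n) (i j : Fin n) (α : ℝ) :
    lazyWalk (Pn n) α (Sum.inl i) (Sum.inl j) = if j = i then α else (1 - α) / n := by
  simp only [lazyWalk]
  rcases eq_or_ne j i with rfl | h
  · simp
  · rw [if_neg (by simpa using h), if_pos (by rw [Pn_adj_ll]; exact h.symm),
      Pn_ncard_l hn, if_neg h]

lemma lazy_l_lr (hn : 1 ≤ n) (i j : Fin n) (α : ℝ) :
    lazyWalk (Pn n) α (Sum.inl i) (Sum.inr j) = if j = i then (1 - α) / n else 0 := by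
  simp only [lazyWalk]
  rcases eq_or_ne j i with rfl | h
  · rw [if_neg (by simp), if_pos (by rw [Pn_adj_lr]), Pn_ncard_l hn, if_pos rfl]
  · rw [if_neg (by simp), if_neg (by rw [Pn_adj_lr]; exact fun e => h e.symm), if_neg h]

lemma lazy_r_rl (hn : 1 ≤ n) (i j : Fin n) (α : ℝ) :
    lazyWalk (Pn n) α (Sum.inr i) (Sum.inl j) = if j = i then (1 - α) / n else 0 := by
  simp only [lazyWalk]
  rcases eq_or_ne j i with rfl | h
  · rw [if_neg (by simp), if_pos (by rw [Pn_adj_rl]), Pn_ncard_r hn, if_pos rfl]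
  · rw [if_neg (by simp), if_neg (by rw [Pn_adj_rl]; exact h), if_neg h]

lemma lazy_r_rr (hn : 1 ≤ n) (i j : Fin n) (α : ℝ) :
    lazyWalk (Pn n) α (Sum.inr i) (Sum.inr j) = if j = i then α else (1 - α) / n := by
  simp only [lazyWalk]
  rcases eq_or_ne j i with rfl | h
  · simp
  · rw [if_neg (by simpa using h), if_pos (by rw [Pn_adj_rr]; exact h.symm),
      Pn_ncard_r hn, if_neg h]

/-- The explicit transference plan from `m_{aᵢ}` to `m_{bᵢ}`. -/
noncomputable def planP (n : ℕ) (i : Fin n) (α : ℝ) : (Fin n ⊕ Fin n) → (Fin n ⊕ Fin n) → ℝ :=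
  fun u v => match u, v with
  | .inl j, .inl k => if j = i ∧ k = i then (1 - α) / n else 0
  | .inl j, .inr k => if j = i ∧ k = i then α - (1 - α) / n
      else if j = k then (1 - α) / n else 0
  | .inr j, .inr k => if j = i ∧ k = i then (1 - α) / n else 0
  | .inr _, .inl _ => 0

end Aux2

section Aux3
variable {n : ℕ}

lemma sum_ite_single {M : Type*} [AddCommMonoid M] {n' : Type*} [Fintype n'] [DecidableEq n']
    (i : n') (a : M) (f : n' → M) (hf : ∀ x, f x = if x = i then a else 0) :
    ∑ x, f x = a := by
  rw [Finset.sum_congr rfl fun x _ => hf x, Finset.sum_ite_eq' Finset.univ i fun _ => a]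
  simp

lemma planP_nonneg (i : Fin n) {α : ℝ} (hβ : 0 ≤ (1 - α) / n)
    (hαβ : (1 - α) / n ≤ α) (u v : Fin n ⊕ Fin n) : 0 ≤ planP n i α u v := by
  rcases u with j | j <;> rcases v with k | k <;> simp only [planP] <;>
    first
    | exact le_refl 0
    | split_ifs <;> linarith

lemma planP_row (hn : 1 ≤ n) (i : Fin n) (α : ℝ) (u : Fin n ⊕ Fin n) :
    ∑ v, planP n i α u v = lazyWalk (Pn n) α (Sum.inl i) u := by
  have pp : ∀ (a : ℝ) (t : Fin n) (f : Fin n → ℝ),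
      (∀ x, f x = if x = t then a else 0) → ∑ x, f x = a := fun a t f hf =>
    sum_ite_single t a f hf
  rcases u with j | j
  · rw [lazy_l_ll hn, Fintype.sum_sum_type]
    rcases eq_or_ne j i with rfl | h
    · rw [pp ((1 - α) / n) j _ (fun x => by
          simp only [planP]; split_ifs <;> subst_vars <;> first | rfl | tauto),
        pp (α - (1 - α) / n) j _ (fun x => by
          simp only [planP]; split_ifs <;> subst_vars <;> first | rfl | tauto)]
      simp
    · rw [pp (0 : ℝ) i _ (fun x => by
          simp only [planP]; split_ifs <;> subst_vars <;> first | rfl | tauto),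
        pp ((1 - α) / n) j _ (fun x => by
          simp only [planP]; split_ifs <;> subst_vars <;> first | rfl | tauto)]
      simp [h]
  · rw [lazy_l_lr hn, Fintype.sum_sum_type]
    rcases eq_or_ne j i with rfl | h
    · rw [pp (0:ℝ) j _ (fun x => by simp [planP]),
        pp ((1 - α) / n) j _ (fun x => by
          simp only [planP]; split_ifs <;> subst_vars <;> first | rfl | tauto)]
      simp
    · rw [pp (0:ℝ) i _ (fun x => by simp [planP]),
        pp (0:ℝ) i _ (fun x => by
          simp only [planP]; split_ifs <;> subst_vars <;> first | rfl | tauto)]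
      simp [h]

lemma planP_col (hn : 1 ≤ n) (i : Fin n) (α : ℝ) (v : Fin n ⊕ Fin n) :
    ∑ u, planP n i α u v = lazyWalk (Pn n) α (Sum.inr i) v := by
  have pp : ∀ (a : ℝ) (t : Fin n) (f : Fin n → ℝ),
      (∀ x, f x = if x = t then a else 0) → ∑ x, f x = a := fun a t f hf =>
    sum_ite_single t a f hf
  rcases v with k | k
  · rw [lazy_r_rl hn, Fintype.sum_sum_type]
    rcases eq_or_ne k i with rfl | h
    · rw [pp ((1 - α) / n) k _ (fun x => by
          simp only [planP]; split_ifs <;> subst_vars <;> first | rfl | tauto),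
        pp (0:ℝ) k _ (fun x => by simp [planP])]
      simp
    · rw [pp (0:ℝ) i _ (fun x => by
          simp only [planP]; split_ifs <;> subst_vars <;> first | rfl | tauto),
        pp (0:ℝ) i _ (fun x => by simp [planP])]
      simp [h]
  · rw [lazy_r_rr hn, Fintype.sum_sum_type]
    rcases eq_or_ne k i with rfl | h
    · rw [pp (α - (1 - α) / n) k _ (fun x => by
          simp only [planP]; split_ifs <;> subst_vars <;> first | rfl | tauto),
        pp ((1 - α) / n) k _ (fun x => by
          simp only [planP]; split_ifs <;> subst_vars <;> first | rfl | tauto)]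
      simp
    · rw [pp ((1 - α) / n) k _ (fun x => by
          simp only [planP]; split_ifs <;> subst_vars <;> first | rfl | tauto),
        pp (0:ℝ) i _ (fun x => by
          simp only [planP]; split_ifs <;> subst_vars <;> first | rfl | tauto)]
      simp [h]

end Aux3

lemma planP_cost {n : ℕ} (hn : 1 ≤ n) (i : Fin n) (α : ℝ) :
    ∑ u, ∑ v, planP n i α u v * ((Pn n).dist u v : ℝ) = 1 - 2 * ((1 - α) / n) := by
  have hn0 : (n : ℝ) ≠ 0 := Nat.cast_ne_zero.mpr (by omega)
  set β : ℝ := (1 - α) / n with hβdef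
  have hnβ : (n : ℝ) * β = 1 - α := by rw [hβdef]; field_simp
  have d1 : ∀ j : Fin n, ((Pn n).dist (Sum.inl j) (Sum.inr j) : ℝ) = 1 := fun j => by
    rw [SimpleGraph.dist_eq_one_iff_adj.mpr ((Pn_adj_lr j j).mpr rfl)]; norm_num
  have h2 : ∀ j : Fin n,
      ∑ v, planP n i α (Sum.inr j) v * ((Pn n).dist (Sum.inr j) v : ℝ) = 0 := by
    intro j
    refine Finset.sum_eq_zero fun v _ => ?_
    rcases v with k | k
    · simp [planP]
    · simp only [planP]; split_ifs with h
      · obtain ⟨rfl, rfl⟩ := h; simp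
      · simp
  have h1 : ∀ j : Fin n,
      ∑ v, planP n i α (Sum.inl j) v * ((Pn n).dist (Sum.inl j) v : ℝ) =
        if j = i then α - β else β := by
    intro j
    rw [Fintype.sum_sum_type]
    have a1 : ∑ k : Fin n,
        planP n i α (Sum.inl j) (Sum.inl k) * ((Pn n).dist (Sum.inl j) (Sum.inl k) : ℝ) = 0 :=
      Finset.sum_eq_zero fun k _ => by
        simp only [planP]; split_ifs with h
        · obtain ⟨rfl, rfl⟩ := h; simp
        · simp
    have a2 : ∑ k : Fin n,
        planP n i α (Sum.inl j) (Sum.inr k) * ((Pn n).dist (Sum.inl j) (Sum.inr k) : ℝ) =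
          if j = i then α - β else β := by
      refine sum_ite_single j _ _ (fun k => ?_)
      rcases eq_or_ne k j with rfl | hk
      · rw [if_pos rfl]
        simp only [planP, d1 k, mul_one]
        by_cases h : k = i <;> simp [h, hβdef]
      · rw [if_neg hk]
        simp only [planP]; split_ifs with h h'
        · exact absurd (h.2.trans h.1.symm) hk
        · exact (hk h'.symm).elim
        · exact zero_mul _
    rw [a1, a2, zero_add]
  rw [Fintype.sum_sum_type, Finset.sum_congr rfl (fun j _ => h1 j),
    Finset.sum_congr rfl (fun j _ => h2 j), Finset.sum_const, smul_zero, add_zero]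
  have : ∑ j : Fin n, (if j = i then α - β else β) = (α - 2 * β) + n * β := by
    rw [Finset.sum_congr rfl (fun j _ =>
      show (if j = i then α - β else β) = (if j = i then α - 2 * β else 0) + β by
        split_ifs <;> ring)]
    rw [Finset.sum_add_distrib, Finset.sum_ite_eq' Finset.univ i, Finset.sum_const,
      Finset.card_univ, Fintype.card_fin]
    simp [nsmul_eq_mul]
  rw [this]
  linarith [hnβ]
/-- In `Pn n` (`n ≥ 2`), for every `α` with `1/(n+1) ≤ α ≤ 1`, every
intercommunity edge `aᵢbᵢ` satisfies `κ^α(aᵢbᵢ) ≥ 2(1−α)/n`; in particular, when moreover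
`α < 1`, every intercommunity edge has strictly positive curvature. -/
theorem positive_curvature_product_config (n : ℕ) (hn : 2 ≤ n)
    (α : ℝ) (hα0 : 1 / ((n : ℝ) + 1) ≤ α) (hα1 : α ≤ 1) (i : Fin n) :
    2 * (1 - α) / (n : ℝ) ≤ kappa (Pn n) α (Sum.inl i) (Sum.inr i) ∧
    (α < 1 → 0 < kappa (Pn n) α (Sum.inl i) (Sum.inr i)) := by
  have hn1 : 1 ≤ n := by omega
  have hn0 : (0 : ℝ) < n := by exact_mod_cast Nat.pos_of_ne_zero (by omega)
  set β : ℝ := (1 - α) / n with hβdef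
  have hβ0 : 0 ≤ β := div_nonneg (by linarith) hn0.le
  have hαβ : β ≤ α := by
    rw [hβdef, div_le_iff₀ hn0]
    rw [div_le_iff₀ (by linarith : (0:ℝ) < (n:ℝ) + 1)] at hα0
    linarith
  have hW : Wass (Pn n) (lazyWalk (Pn n) α (Sum.inl i)) (lazyWalk (Pn n) α (Sum.inr i)) ≤
      1 - 2 * β := by
    refine csInf_le ⟨0, ?_⟩ ?_
    · rintro c ⟨π, ⟨hpos, -, -⟩, rfl⟩
      exact Finset.sum_nonneg fun u _ => Finset.sum_nonneg fun v _ =>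
        mul_nonneg (hpos u v) (Nat.cast_nonneg _)
    · exact ⟨planP n i α,
        ⟨planP_nonneg i hβ0 hαβ, planP_row hn1 i α, planP_col hn1 i α⟩,
        (planP_cost hn1 i α).symm⟩
  have hkey : 2 * (1 - α) / (n : ℝ) ≤ kappa (Pn n) α (Sum.inl i) (Sum.inr i) := by
    have h2β : 2 * (1 - α) / (n : ℝ) = 2 * β := by rw [hβdef]; ring
    rw [kappa, h2β]
    linarith
  refine ⟨hkey, fun hlt => lt_of_lt_of_le ?_ hkey⟩
  exact div_pos (by linarith) hn0
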